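/- Let A = {a_0, a_1, …, a_d} with a_0 < a_1 < … < a_d, and suppose β > 1 + (a_d − a_0)/(a_{j+1} − a_j) for some 0 ≤ j < d. Then the periodic-tail sequence u = a_j, a_d, a_d, a_d, … is a unique expansion, i.e., x = a_j/β + Σ_{k≥2} a_d β^{-k} has no other expansion (v_k) ∈ A^ℕ with x = Σ_{k≥1} v_k β^{-k}. -/

import Mathlib

theorem stmt_1 (d : ℕ) (hd : 0 < d) (a : ℕ → ℝ) (ha : ∀ i < d, a i < a (i + 1))
    (β : ℝ) (j : ℕ) (hj : j < d) (hβ : β > 1 + (a d - a 0) / (a (j + 1) - a j)) :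
    ∀ v : ℕ → ℕ, (∀ k, v k ≤ d) →
      (∑' k : ℕ, a (v k) / β ^ (k + 1)) = a j / β + ∑' k : ℕ, a d / β ^ (k + 2) →
      ∀ k, a (v k) = if k = 0 then a j else a d := by
  intro v hv heq
  have hstep : 0 < a (j + 1) - a j := sub_pos.2 (ha j hj)
  -- monotonicity
  have mono : ∀ k, k ≤ d → ∀ i ≤ k, a i ≤ a k := by
    intro k
    induction k with
    | zero => intro _ i hi; simp [Nat.le_zero.mp hi]
    | succ n ih =>
      intro hkd i hi
      rcases eq_or_lt_of_le hi with h | h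
      · rw [h]
      · exact le_of_lt (lt_of_le_of_lt (ih (by omega) i (by omega)) (ha n (by omega)))
  have smono : ∀ i k, i < k → k ≤ d → a i < a k := by
    intro i k h hk
    have hk1 : k - 1 + 1 = k := by omega
    calc a i ≤ a (k - 1) := mono (k - 1) (by omega) i (by omega)
      _ < a k := by have := ha (k - 1) (by omega); rwa [hk1] at this
  have a0d : a 0 < a d := smono 0 d hd le_rfl
  have hβ1 : 1 < β := by
    have : 0 < (a d - a 0) / (a (j + 1) - a j) := div_pos (by linarith) hstep
    linarith
  have hβ0 : 0 < β := by linarith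
  have hβne : β ≠ 0 := ne_of_gt hβ0
  -- summability
  have hr1 : (1:ℝ)/β < 1 := by rw [div_lt_one hβ0]; linarith
  have hgeo : Summable (fun k : ℕ => (1/β) ^ k) :=
    summable_geometric_of_lt_one (by positivity) hr1
  have hsumc : ∀ c : ℝ, Summable (fun k : ℕ => c / β ^ (k + 1)) := by
    intro c
    have h : (fun k : ℕ => c / β ^ (k + 1)) = fun k => (c / β) * (1/β) ^ k := by
      funext k; rw [div_pow, one_pow, div_mul_div_comm, mul_one, ← pow_succ']
    rw [h]; exact hgeo.mul_left _
  have hsumb : ∀ (f : ℕ → ℝ) (M : ℝ), (∀ k, |f k| ≤ M) →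
      Summable (fun k => f k / β ^ (k + 1)) := by
    intro f M hM
    apply Summable.of_norm_bounded (g := fun k => M / β ^ (k + 1)) (hsumc M)
    intro k
    rw [Real.norm_eq_abs, abs_div, abs_of_pos (pow_pos hβ0 _)]
    gcongr
    exact hM k
  set M : ℝ := max |a 0| |a d| with hMdef
  have habs : ∀ i, i ≤ d → |a i| ≤ M := by
    intro i hi
    rw [abs_le]
    constructor
    · have h1 : a 0 ≤ a i := mono i hi 0 (Nat.zero_le i)
      have h2 : -|a 0| ≤ a 0 := neg_abs_le _
      have h3 : |a 0| ≤ M := le_max_left _ _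
      linarith
    · have h1 : a i ≤ a d := mono d le_rfl i hi
      have h2 : |a d| ≤ M := le_max_right _ _
      have h3 := le_abs_self (a d)
      linarith
  have Sv : Summable (fun k => a (v k) / β ^ (k + 1)) :=
    hsumb _ M (fun k => habs _ (hv k))
  have Sif : ∀ b c : ℝ, |b| ≤ M → |c| ≤ M →
      Summable (fun k : ℕ => (if k = 0 then b else c) / β ^ (k + 1)) := by
    intro b c hb hc
    apply hsumb _ M
    intro k
    by_cases h : k = 0 <;> simp [h, hb, hc]
  -- closed form for tails
  have hts : ∀ c : ℝ, (∑' k : ℕ, c / β ^ (k + 2)) = c / (β * (β - 1)) := by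
    intro c
    have h1 : (fun k : ℕ => c / β ^ (k + 2)) = fun k => (c / β ^ 2) * (1/β) ^ k := by
      funext k; rw [div_pow, one_pow, div_mul_div_comm, mul_one]; congr 1; ring
    rw [h1, tsum_mul_left, tsum_geometric_of_lt_one (by positivity) hr1]
    have h2 : β - 1 ≠ 0 := by intro h; linarith [sub_eq_zero.mp h]
    field_simp
  have hsplitc : ∀ b c : ℝ, |b| ≤ M → |c| ≤ M →
      (∑' k : ℕ, (if k = 0 then b else c) / β ^ (k + 1)) = b / β + c / (β * (β - 1)) := by
    intro b c hb hc
    rw [Summable.tsum_eq_zero_add (Sif b c hb hc)]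
    norm_num
    rw [hts c]
  have hMj : |a j| ≤ M := habs j (by omega)
  have hMj1 : |a (j + 1)| ≤ M := habs (j + 1) (by omega)
  have hMd : |a d| ≤ M := habs d le_rfl
  have hM0 : |a 0| ≤ M := habs 0 (by omega)
  have heq' : (∑' k : ℕ, a (v k) / β ^ (k + 1)) = a j / β + a d / (β * (β - 1)) := by
    rw [heq, hts]
  -- key numeric inequality
  have hkey : a j / β + a d / (β * (β - 1)) < a (j + 1) / β + a 0 / (β * (β - 1)) := by
    have h2 : a d - a 0 < (β - 1) * (a (j + 1) - a j) := by
      have := (div_lt_iff₀ hstep).1 (by linarith : (a d - a 0) / (a (j + 1) - a j) < β - 1)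
      linarith
    have hD : (0:ℝ) < β * (β - 1) := by nlinarith
    have h3 : (a d - a 0) / (β * (β - 1)) < (a (j + 1) - a j) / β := by
      rw [div_lt_div_iff₀ hD hβ0]
      nlinarith
    have e1 := sub_div (a d) (a 0) (β * (β - 1))
    have e2 := sub_div (a (j + 1)) (a j) β
    linarith
  -- step A : first digit
  have hA : a (v 0) = a j := by
    rcases lt_trichotomy (v 0) j with h | h | h
    · exfalso
      have hlt : (∑' k, a (v k) / β ^ (k + 1)) <
          ∑' k : ℕ, (if k = 0 then a j else a d) / β ^ (k + 1) := by
        refine Summable.tsum_lt_tsum (i := 0) ?_ ?_ Sv (Sif _ _ hMj hMd)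
        · intro k
          by_cases hk : k = 0
          · subst hk
            simp only [if_pos rfl]
            gcongr
            exact (smono _ _ h (by omega)).le
          · simp only [hk, if_false]
            gcongr
            exact mono d le_rfl _ (hv k)
        · simp only [if_pos rfl]
          gcongr
          exact smono _ _ h (by omega)
      rw [hsplitc _ _ hMj hMd, heq'] at hlt
      exact lt_irrefl _ hlt
    · rw [h]
    · exfalso
      have hge : (∑' k : ℕ, (if k = 0 then a (j + 1) else a 0) / β ^ (k + 1)) ≤
          ∑' k, a (v k) / β ^ (k + 1) := by
        refine Summable.tsum_le_tsum ?_ (Sif _ _ hMj1 hM0) Sv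
        intro k
        by_cases hk : k = 0
        · subst hk
          simp only [if_pos rfl]
          gcongr
          exact mono _ (hv 0) _ (by omega)
        · simp only [hk, if_false]
          gcongr
          exact mono _ (hv k) 0 (by omega)
      rw [hsplitc _ _ hMj1 hM0, heq'] at hge
      linarith
  -- step B : all digits
  intro k
  have hpt : ∀ m, a (v m) / β ^ (m + 1) ≤ (if m = 0 then a j else a d) / β ^ (m + 1) := by
    intro m
    by_cases hm : m = 0
    · subst hm; simp [hA]
    · simp only [hm, if_false]
      gcongr
      exact mono d le_rfl _ (hv m)
  have hEq : (∑' m, a (v m) / β ^ (m + 1)) =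
      ∑' m : ℕ, (if m = 0 then a j else a d) / β ^ (m + 1) := by
    rw [heq', hsplitc _ _ hMj hMd]
  by_contra hne
  have hlt : a (v k) / β ^ (k + 1) < (if k = 0 then a j else a d) / β ^ (k + 1) := by
    refine lt_of_le_of_ne (hpt k) ?_
    intro hc
    apply hne
    have hp : (β:ℝ) ^ (k + 1) ≠ 0 := ne_of_gt (pow_pos hβ0 _)
    field_simp at hc
    exact hc
  have := Summable.tsum_lt_tsum hpt hlt Sv (Sif _ _ hMj hMd)
  rw [hEq] at this
  exact lt_irrefl _ this
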